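/- Let n, m ≥ 1 and ε ≥ 0. Let L and L' be real symmetric positive semidefinite n×n matrices with L·𝟙ₙ = 0 and L'·𝟙ₙ = 0 (the all-ones vector is in their kernels), and suppose that (1/(1+ε))·zᵀLz ≤ zᵀL'z ≤ (1+ε)·zᵀLz holds for all z ∈ ℝⁿ. For k = 1,…,m let V_k be an n×n real diagonal matrix with all diagonal entries nonzero. Let V be the mn×mn block-diagonal matrix with diagonal blocks V_1,…,V_m, let 𝓛 (resp. 𝓛') be the mn×mn block-diagonal matrix with m diagonal copies of L (resp. L'), let 𝒫 ∈ ℝ^{mn} be arbitrary, let 𝟙 ∈ ℝ^{mn} be the all-ones vector, and let φ_V ∈ ℝ^{mn} be the vector whose k-th block of length n has all entries equal to Tr(V_k⁻¹)/Tr(V_k⁻²). Then (1/√(mn))·‖V𝓛'V𝟙 − 𝒫‖ ≤ (1/√(mn))·‖V𝓛V𝟙 − 𝒫‖ + ε·‖V𝓛V‖·‖𝟙 − V⁻¹φ_V‖/√(mn), where ‖·‖ denotes the Euclidean norm on vectors and the spectral (operator 2-) norm on matrices. -/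

import Mathlib

open Matrix
open scoped Matrix.Norms.L2Operator

/-- The Euclidean norm of a real vector. -/
noncomputable def vnorm {ι : Type*} [Fintype ι] (v : ι → ℝ) : ℝ :=
  Real.sqrt (∑ i, v i ^ 2)

section Aux
variable {ι : Type*} [Fintype ι]

lemma vnorm_eq (v : ι → ℝ) : vnorm v = ‖(EuclideanSpace.equiv ι ℝ).symm v‖ := by
  rw [vnorm, EuclideanSpace.norm_eq]
  congr 1
  refine Finset.sum_congr rfl fun i _ => ?_
  simp [Real.norm_eq_abs, sq_abs]

lemma vnorm_nonneg (v : ι → ℝ) : 0 ≤ vnorm v := Real.sqrt_nonneg _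

lemma vnorm_triangle (a b : ι → ℝ) : vnorm (a + b) ≤ vnorm a + vnorm b := by
  simp only [vnorm_eq]
  exact norm_add_le ((EuclideanSpace.equiv ι ℝ).symm a) ((EuclideanSpace.equiv ι ℝ).symm b)

lemma dot_le_vnorm (a b : ι → ℝ) : a ⬝ᵥ b ≤ vnorm a * vnorm b := by
  simp only [vnorm_eq]
  have h := real_inner_le_norm ((EuclideanSpace.equiv ι ℝ).symm a)
    ((EuclideanSpace.equiv ι ℝ).symm b)
  refine le_trans (le_of_eq ?_) h
  simp [PiLp.inner_apply, RCLike.inner_apply, dotProduct, mul_comm]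

lemma vnorm_mulVec_le [DecidableEq ι] (A : Matrix ι ι ℝ) (x : ι → ℝ) :
    vnorm (A *ᵥ x) ≤ ‖A‖ * vnorm x := by
  simpa [vnorm_eq] using A.l2_opNorm_mulVec ((EuclideanSpace.equiv ι ℝ).symm x)

lemma vnorm_eq_zero_iff (v : ι → ℝ) : vnorm v = 0 ↔ v = 0 := by
  rw [vnorm_eq, norm_eq_zero]
  constructor
  · intro h
    have := congrArg (EuclideanSpace.equiv ι ℝ) h
    simpa using this
  · rintro rfl; simp

lemma key_bound [DecidableEq ι] (ε : ℝ) (hε : 0 ≤ ε) (C M : Matrix ι ι ℝ)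
    (hC : Cᵀ = C)
    (hq : ∀ z : ι → ℝ, |z ⬝ᵥ C *ᵥ z| ≤ ε * (z ⬝ᵥ M *ᵥ z))
    (x : ι → ℝ) : vnorm (C *ᵥ x) ≤ ε * ‖M‖ * vnorm x := by
  have hM : ∀ z : ι → ℝ, z ⬝ᵥ M *ᵥ z ≤ ‖M‖ * vnorm z ^ 2 := by
    intro z
    calc z ⬝ᵥ M *ᵥ z ≤ vnorm z * vnorm (M *ᵥ z) := dot_le_vnorm _ _
      _ ≤ vnorm z * (‖M‖ * vnorm z) :=
        mul_le_mul_of_nonneg_left (vnorm_mulVec_le M z) (vnorm_nonneg z)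
      _ = ‖M‖ * vnorm z ^ 2 := by ring
  have hsym : ∀ a b : ι → ℝ, b ⬝ᵥ C *ᵥ a = a ⬝ᵥ C *ᵥ b := by
    intro a b
    rw [dotProduct_mulVec, ← mulVec_transpose, hC]
    exact dotProduct_comm _ _
  have step1 : ∀ a b : ι → ℝ, a ⬝ᵥ C *ᵥ b ≤ ε / 2 * (a ⬝ᵥ M *ᵥ a + b ⬝ᵥ M *ᵥ b) := by
    intro a b
    have h1 := abs_le.mp (hq (a + b))
    have h2 := abs_le.mp (hq (a - b))
    simp only [mulVec_add, mulVec_sub, dotProduct_add, dotProduct_sub, add_dotProduct,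
      sub_dotProduct] at h1 h2
    rw [hsym a b] at h1 h2
    linarith [h1.1, h1.2, h2.1, h2.2]
  have step2 : ∀ (a b : ι → ℝ) (t : ℝ), 0 < t →
      a ⬝ᵥ C *ᵥ b ≤ ε / 2 * (t * (a ⬝ᵥ M *ᵥ a) + (1 / t) * (b ⬝ᵥ M *ᵥ b)) := by
    intro a b t ht
    have hst : 0 < Real.sqrt t := Real.sqrt_pos.mpr ht
    have hss : Real.sqrt t * Real.sqrt t = t := Real.mul_self_sqrt ht.le
    have h := step1 (Real.sqrt t • a) ((Real.sqrt t)⁻¹ • b)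
    simp only [mulVec_smul, smul_dotProduct, dotProduct_smul, smul_eq_mul] at h
    have e1 : (Real.sqrt t)⁻¹ * (Real.sqrt t * (a ⬝ᵥ C *ᵥ b)) = a ⬝ᵥ C *ᵥ b := by
      rw [← mul_assoc, inv_mul_cancel₀ hst.ne', one_mul]
    have e2 : Real.sqrt t * (Real.sqrt t * (a ⬝ᵥ M *ᵥ a)) = t * (a ⬝ᵥ M *ᵥ a) := by
      rw [← mul_assoc, hss]
    have e3 : (Real.sqrt t)⁻¹ * ((Real.sqrt t)⁻¹ * (b ⬝ᵥ M *ᵥ b)) = (1 / t) * (b ⬝ᵥ M *ᵥ b) := by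
      rw [← mul_assoc, ← mul_inv, hss, one_div]
    rw [e1, e2, e3] at h
    exact h
  set u := C *ᵥ x with hu
  rcases eq_or_ne (vnorm u) 0 with hb | hb
  · rw [hb]
    exact mul_nonneg (mul_nonneg hε (norm_nonneg _)) (vnorm_nonneg _)
  · have hb' : 0 < vnorm u := lt_of_le_of_ne (vnorm_nonneg u) (Ne.symm hb)
    rcases eq_or_ne (vnorm x) 0 with ha | ha
    · exfalso
      apply hb
      have hx : x = 0 := (vnorm_eq_zero_iff x).mp ha
      rw [hu, hx, mulVec_zero]
      exact (vnorm_eq_zero_iff 0).mpr rfl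
    · have ha' : 0 < vnorm x := lt_of_le_of_ne (vnorm_nonneg x) (Ne.symm ha)
      set a := vnorm x with hadef
      set b := vnorm u with hbdef
      have hS : (0:ℝ) ≤ ∑ i, u i ^ 2 := Finset.sum_nonneg fun i _ => sq_nonneg _
      have hbb : u ⬝ᵥ u = b ^ 2 := by
        rw [hbdef, vnorm, Real.sq_sqrt hS]
        simp [dotProduct, sq]
      have h2 := step2 u x (a / b) (div_pos ha' hb')
      have huCx : u ⬝ᵥ C *ᵥ x = b ^ 2 := by rw [← hu, hbb]
      rw [huCx] at h2
      have hod : (1 : ℝ) / (a / b) = b / a := one_div_div a b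
      rw [hod] at h2
      have hMu := hM u
      have hMx := hM x
      have e1 : a / b * (‖M‖ * b ^ 2) = ‖M‖ * a * b := by
        field_simp
      have e2 : b / a * (‖M‖ * a ^ 2) = ‖M‖ * a * b := by
        field_simp
      have i1 : a / b * (u ⬝ᵥ M *ᵥ u) ≤ ‖M‖ * a * b := by
        rw [← e1]
        exact mul_le_mul_of_nonneg_left hMu (div_pos ha' hb').le
      have i2 : b / a * (x ⬝ᵥ M *ᵥ x) ≤ ‖M‖ * a * b := by
        rw [← e2]
        exact mul_le_mul_of_nonneg_left hMx (div_pos hb' ha').le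
      have hkey : b ^ 2 ≤ ε * ‖M‖ * a * b := by nlinarith
      have : b * b ≤ (ε * ‖M‖ * a) * b := by nlinarith
      exact le_of_mul_le_mul_right this hb'

lemma blockDiagonal_mulVec_apply {κ : Type*} [Fintype κ] [DecidableEq κ]
    (f : κ → Matrix ι ι ℝ) (v : ι × κ → ℝ) (p : ι × κ) :
    (blockDiagonal f *ᵥ v) p = (f p.2 *ᵥ fun j => v (j, p.2)) p.1 := by
  obtain ⟨i, k⟩ := p
  simp only [mulVec, dotProduct, blockDiagonal_apply]
  rw [Fintype.sum_prod_type]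
  simp [ite_mul, Finset.sum_ite_eq]

lemma blockDiagonal_dot {κ : Type*} [Fintype κ] [DecidableEq κ]
    (f : κ → Matrix ι ι ℝ) (z : ι × κ → ℝ) :
    z ⬝ᵥ blockDiagonal f *ᵥ z = ∑ k, (fun i => z (i, k)) ⬝ᵥ f k *ᵥ (fun i => z (i, k)) := by
  calc z ⬝ᵥ blockDiagonal f *ᵥ z = ∑ p : ι × κ, z p * (blockDiagonal f *ᵥ z) p := rfl
    _ = ∑ p : ι × κ, z p * (f p.2 *ᵥ fun j => z (j, p.2)) p.1 := by
        refine Finset.sum_congr rfl fun p _ => ?_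
        rw [blockDiagonal_mulVec_apply]
    _ = ∑ i, ∑ k, z (i, k) * (f k *ᵥ fun j => z (j, k)) i := by
        rw [Fintype.sum_prod_type]
    _ = ∑ k, ∑ i, z (i, k) * (f k *ᵥ fun j => z (j, k)) i := Finset.sum_comm
    _ = ∑ k, (fun i => z (i, k)) ⬝ᵥ f k *ᵥ (fun i => z (i, k)) := rfl

end Aux

/-- Main DC theorem. If `L'` is the Laplacian of an ε-approximation of the
network with Laplacian `L`, then the fitting error of the sparse network exceeds that of the
original by at most `ε‖V𝓛V‖‖𝟙 − V⁻¹φ_V‖/√(mn)`. -/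
theorem dc_sparse_rms_bound
    (n m : ℕ) (hn : 1 ≤ n) (hm : 1 ≤ m) (ε : ℝ) (hε : 0 ≤ ε)
    (L L' : Matrix (Fin n) (Fin n) ℝ)
    (hL : L.PosSemidef) (hL' : L'.PosSemidef)
    (hL1 : L.mulVec (fun _ => 1) = 0) (hL'1 : L'.mulVec (fun _ => 1) = 0)
    (hsand : ∀ z : Fin n → ℝ,
      (1 / (1 + ε)) * (z ⬝ᵥ L.mulVec z) ≤ z ⬝ᵥ L'.mulVec z ∧
      z ⬝ᵥ L'.mulVec z ≤ (1 + ε) * (z ⬝ᵥ L.mulVec z))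
    (d : Fin m → Fin n → ℝ) (hd : ∀ k j, d k j ≠ 0)
    (P : Fin n × Fin m → ℝ)
    -- the block-diagonal voltage matrix and block-diagonal Laplacians
    (V 𝓛 𝓛' : Matrix (Fin n × Fin m) (Fin n × Fin m) ℝ)
    (hV : V = blockDiagonal (fun k => diagonal (d k)))
    (h𝓛 : 𝓛 = blockDiagonal (fun _ => L))
    (h𝓛' : 𝓛' = blockDiagonal (fun _ => L'))
    -- the block-constant vector φ_V with entries Tr(V_k⁻¹)/Tr(V_k⁻²)
    (φ : Fin n × Fin m → ℝ)
    (hφ : φ = fun p => ((diagonal (d p.2))⁻¹).trace /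
      ((diagonal (d p.2))⁻¹ * (diagonal (d p.2))⁻¹).trace) :
    (1 / Real.sqrt (m * n)) * vnorm ((V * 𝓛' * V).mulVec (fun _ => 1) - P) ≤
      (1 / Real.sqrt (m * n)) * vnorm ((V * 𝓛 * V).mulVec (fun _ => 1) - P) +
        ε * ‖V * 𝓛 * V‖ * vnorm ((fun _ => 1) - V⁻¹.mulVec φ) / Real.sqrt (m * n) := by
  classical
  have h1e : (0:ℝ) < 1 + ε := by linarith
  set M := V * 𝓛 * V with hMdef
  set M' := V * 𝓛' * V with hM'def
  set C := M' - M with hCdef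
  set w : Fin n × Fin m → ℝ := (fun _ => 1) - V⁻¹ *ᵥ φ with hw
  have hVsym : Vᵀ = V := by
    rw [hV, blockDiagonal_transpose]
    simp
  have quadV : ∀ (A : Matrix (Fin n × Fin m) (Fin n × Fin m) ℝ) (z : Fin n × Fin m → ℝ),
      z ⬝ᵥ (V * A * V) *ᵥ z = (V *ᵥ z) ⬝ᵥ A *ᵥ (V *ᵥ z) := by
    intro A z
    rw [← mulVec_mulVec, ← mulVec_mulVec, dotProduct_mulVec, ← mulVec_transpose, hVsym]
  -- per-block sandwich
  have hblock : ∀ y : Fin n → ℝ,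
      |y ⬝ᵥ L' *ᵥ y - y ⬝ᵥ L *ᵥ y| ≤ ε * (y ⬝ᵥ L *ᵥ y) := by
    intro y
    have hq0 : 0 ≤ y ⬝ᵥ L *ᵥ y := by
      have := hL.dotProduct_mulVec_nonneg y
      simpa [dotProduct, mulVec] using this
    obtain ⟨hA, hB⟩ := hsand y
    have hq1 : y ⬝ᵥ L *ᵥ y ≤ (1 + ε) * (y ⬝ᵥ L' *ᵥ y) := by
      calc y ⬝ᵥ L *ᵥ y = (1 + ε) * ((1 / (1 + ε)) * (y ⬝ᵥ L *ᵥ y)) := by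
            field_simp
        _ ≤ (1 + ε) * (y ⬝ᵥ L' *ᵥ y) := mul_le_mul_of_nonneg_left hA h1e.le
    rw [abs_le]
    constructor
    · nlinarith [sq_nonneg ε]
    · linarith
  -- global sandwich
  have hqC : ∀ z : Fin n × Fin m → ℝ, |z ⬝ᵥ C *ᵥ z| ≤ ε * (z ⬝ᵥ M *ᵥ z) := by
    intro z
    have hCz : z ⬝ᵥ C *ᵥ z = z ⬝ᵥ M' *ᵥ z - z ⬝ᵥ M *ᵥ z := by
      rw [hCdef, sub_mulVec, dotProduct_sub]
    rw [hCz, hMdef, hM'def, quadV, quadV, h𝓛, h𝓛', blockDiagonal_dot, blockDiagonal_dot]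
    rw [← Finset.sum_sub_distrib]
    calc |∑ k, ((fun i => (V *ᵥ z) (i, k)) ⬝ᵥ L' *ᵥ (fun i => (V *ᵥ z) (i, k)) -
            (fun i => (V *ᵥ z) (i, k)) ⬝ᵥ L *ᵥ (fun i => (V *ᵥ z) (i, k)))|
        ≤ ∑ k, |(fun i => (V *ᵥ z) (i, k)) ⬝ᵥ L' *ᵥ (fun i => (V *ᵥ z) (i, k)) -
            (fun i => (V *ᵥ z) (i, k)) ⬝ᵥ L *ᵥ (fun i => (V *ᵥ z) (i, k))| :=
          Finset.abs_sum_le_sum_abs _ _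
      _ ≤ ∑ k, ε * ((fun i => (V *ᵥ z) (i, k)) ⬝ᵥ L *ᵥ (fun i => (V *ᵥ z) (i, k))) :=
          Finset.sum_le_sum fun k _ => hblock _
      _ = ε * ∑ k, (fun i => (V *ᵥ z) (i, k)) ⬝ᵥ L *ᵥ (fun i => (V *ᵥ z) (i, k)) :=
          (Finset.mul_sum _ _ _).symm
  -- symmetry of C
  have hLsym : Lᵀ = L := by
    have := hL.1
    rwa [IsHermitian, conjTranspose_eq_transpose_of_trivial] at this
  have hL'sym : L'ᵀ = L' := by
    have := hL'.1
    rwa [IsHermitian, conjTranspose_eq_transpose_of_trivial] at this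
  have h𝓛sym : 𝓛ᵀ = 𝓛 := by
    rw [h𝓛, blockDiagonal_transpose]
    simp [hLsym]
  have h𝓛'sym : 𝓛'ᵀ = 𝓛' := by
    rw [h𝓛', blockDiagonal_transpose]
    simp [hL'sym]
  have hCsym : Cᵀ = C := by
    rw [hCdef, transpose_sub, hMdef, hM'def]
    simp only [transpose_mul, hVsym, h𝓛sym, h𝓛'sym, Matrix.mul_assoc]
  -- inverse of V
  set W : Matrix (Fin n × Fin m) (Fin n × Fin m) ℝ :=
    blockDiagonal (fun k => diagonal (fun j => (d k j)⁻¹)) with hWdef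
  have hVW : V * W = 1 := by
    rw [hV, hWdef, ← blockDiagonal_mul]
    have h1 : ∀ k : Fin m, diagonal (d k) * diagonal (fun j => (d k j)⁻¹) =
        (1 : Matrix (Fin n) (Fin n) ℝ) := by
      intro k
      rw [diagonal_mul_diagonal]
      have hjj : (fun j => d k j * (d k j)⁻¹) = fun _ : Fin n => (1 : ℝ) := by
        funext j
        exact mul_inv_cancel₀ (hd k j)
      rw [hjj, diagonal_one]
    have h2 : (fun k => diagonal (d k) * diagonal (fun j => (d k j)⁻¹)) =
        fun _ : Fin m => (1 : Matrix (Fin n) (Fin n) ℝ) := by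
      funext k
      exact h1 k
    rw [h2]
    exact blockDiagonal_one
  have hVinv : V⁻¹ = W := inv_eq_right_inv hVW
  -- C annihilates V⁻¹ φ
  have hC2 : C = V * (𝓛' - 𝓛) * V := by
    rw [hCdef, hMdef, hM'def]
    noncomm_ring
  have hφ0 : (𝓛' - 𝓛) *ᵥ φ = 0 := by
    have hbd : 𝓛' - 𝓛 = blockDiagonal (fun _ => L' - L) := by
      rw [h𝓛, h𝓛', ← blockDiagonal_sub]
      rfl
    funext p
    rw [hbd, blockDiagonal_mulVec_apply]
    have hconst : (fun j => φ (j, p.2)) =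
        (((diagonal (d p.2))⁻¹).trace /
          ((diagonal (d p.2))⁻¹ * (diagonal (d p.2))⁻¹).trace) • (fun _ => (1:ℝ)) := by
      funext j
      simp [hφ]
    rw [hconst, mulVec_smul, sub_mulVec, hL'1, hL1, sub_zero, smul_zero]
    rfl
  have hCw : C *ᵥ w = C *ᵥ (fun _ => 1) := by
    rw [hw, mulVec_sub]
    have hVV : V * V⁻¹ = 1 := by rw [hVinv]; exact hVW
    have hz : C *ᵥ (V⁻¹ *ᵥ φ) = 0 := by
      rw [mulVec_mulVec, hC2, Matrix.mul_assoc (V * (𝓛' - 𝓛)) V V⁻¹, hVV, Matrix.mul_one,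
        ← mulVec_mulVec, hφ0, mulVec_zero]
    rw [hz, sub_zero]
  -- final assembly
  have hCwb : vnorm (C *ᵥ w) ≤ ε * ‖M‖ * vnorm w := key_bound ε hε C M hCsym hqC w
  have hsplit : M' *ᵥ (fun _ => 1) - P = (M *ᵥ (fun _ => 1) - P) + C *ᵥ w := by
    rw [hCw, hCdef, sub_mulVec]
    abel
  have h1s : (0:ℝ) ≤ 1 / Real.sqrt (m * n) := by positivity
  have tri := vnorm_triangle (M *ᵥ (fun _ => 1) - P) (C *ᵥ w)
  rw [← hsplit] at tri
  have chain : vnorm (M' *ᵥ (fun _ => 1) - P) ≤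
      vnorm (M *ᵥ (fun _ => 1) - P) + ε * ‖M‖ * vnorm w := by linarith
  calc (1 / Real.sqrt (m * n)) * vnorm (M' *ᵥ (fun _ => 1) - P)
      ≤ (1 / Real.sqrt (m * n)) * (vnorm (M *ᵥ (fun _ => 1) - P) + ε * ‖M‖ * vnorm w) :=
        mul_le_mul_of_nonneg_left chain h1s
    _ = (1 / Real.sqrt (m * n)) * vnorm (M *ᵥ (fun _ => 1) - P) +
        ε * ‖M‖ * vnorm w / Real.sqrt (m * n) := by ring
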